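/- Let the n×n symmetric matrix B* satisfy B*|_{C_k×C_{k'}}(i,j) = y_{kk'}(i) + z_{kk'}(j) for all k < k' and B*|_{C_k×C_k} = 0, where C₁,…,C_r partition [n]. Then for every x ∈ ℝⁿ orthogonal to the span of the cluster indicator vectors ξ₁,…,ξ_r, one has xᵀB*x = 0. -/

import Mathlib

open Matrix

private lemma split_sum_by_class {n r : ℕ} (c : Fin n → Fin r) (h : Fin n → ℝ) :
    ∑ i, h i = ∑ k, ∑ i, (if c i = k then h i else 0) := by
  rw [← Finset.sum_fiberwise Finset.univ c h]
  exact Finset.sum_congr rfl fun k _ => Finset.sum_filter _ _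

/-- If the symmetric matrix `B` vanishes on diagonal blocks and on each off-diagonal
block `C_k × C_{k'}` has the form `B(i,j) = y_{kk'}(i) + z_{kk'}(j)`, then `xᵀBx = 0`
for every `x` orthogonal to all cluster indicator vectors. -/
theorem block_structured_quadratic_form_vanishes {n r : ℕ}
    (c : Fin n → Fin r)
    (B : Matrix (Fin n) (Fin n) ℝ) (hBsymm : B.IsSymm)
    (y z : Fin r → Fin r → Fin n → ℝ)
    (hdiag : ∀ i j, c i = c j → B i j = 0)
    (hblock : ∀ i j, c i < c j → B i j = y (c i) (c j) i + z (c i) (c j) j) :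
    ∀ x : Fin n → ℝ,
      (∀ k : Fin r, ∑ i, (if c i = k then (1 : ℝ) else 0) * x i = 0) →
      dotProduct x (B.mulVec x) = 0 := by
  intro x hx
  have hx' : ∀ k, ∑ i, (if c i = k then x i else 0) = 0 := by
    intro k
    have := hx k
    simpa [ite_mul] using this
  have key : ∀ k k' : Fin r,
      ∑ i, ∑ j, (if c i = k then if c j = k' then x i * B i j * x j else 0 else 0) = 0 := by
    intro k k'
    rcases lt_trichotomy k k' with h | h | h
    · have heq : ∀ i j, (if c i = k then if c j = k' then x i * B i j * x j else 0 else 0)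
        = (if c i = k then x i * y k k' i else 0) * (if c j = k' then x j else 0)
          + (if c i = k then x i else 0) * (if c j = k' then x j * z k k' j else 0) := by
        intro i j
        by_cases hi : c i = k
        · by_cases hj : c j = k'
          · rw [if_pos hi, if_pos hi, if_pos hi, if_pos hj, if_pos hj, if_pos hj,
              hblock i j (by rw [hi, hj]; exact h), hi, hj]
            ring
          · simp [hj]
        · simp [hi]
      simp only [heq, Finset.sum_add_distrib, ← Finset.mul_sum, hx' k', mul_zero,
        Finset.sum_const_zero, zero_add]
      rw [← Finset.sum_mul, hx' k, zero_mul]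
    · apply Finset.sum_eq_zero
      intro i _
      apply Finset.sum_eq_zero
      intro j _
      by_cases hi : c i = k
      · by_cases hj : c j = k'
        · rw [if_pos hi, if_pos hj, hdiag i j (by rw [hi, hj, h]), mul_zero, zero_mul]
        · simp [hj]
      · simp [hi]
    · have heq : ∀ i j, (if c i = k then if c j = k' then x i * B i j * x j else 0 else 0)
        = (if c i = k then x i * z k' k i else 0) * (if c j = k' then x j else 0)
          + (if c i = k then x i else 0) * (if c j = k' then x j * y k' k j else 0) := by
        intro i j
        by_cases hi : c i = k
        · by_cases hj : c j = k'
          · rw [if_pos hi, if_pos hi, if_pos hi, if_pos hj, if_pos hj, if_pos hj,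
              ← hBsymm.apply, hblock j i (by rw [hi, hj]; exact h), hi, hj]
            ring
          · simp [hj]
        · simp [hi]
      simp only [heq, Finset.sum_add_distrib, ← Finset.mul_sum, hx' k', mul_zero,
        Finset.sum_const_zero, zero_add]
      rw [← Finset.sum_mul, hx' k, zero_mul]
  calc dotProduct x (B.mulVec x)
      = ∑ i, ∑ j, x i * B i j * x j := by
        simp [dotProduct, Matrix.mulVec, Finset.mul_sum, mul_assoc, mul_comm, mul_left_comm]
    _ = ∑ k, ∑ i, (if c i = k then ∑ j, x i * B i j * x j else 0) :=
        split_sum_by_class c _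
    _ = ∑ k, ∑ i, ∑ k', ∑ j, (if c i = k then if c j = k' then x i * B i j * x j else 0 else 0) := by
        refine Finset.sum_congr rfl fun k _ => Finset.sum_congr rfl fun i _ => ?_
        by_cases hi : c i = k
        · simp only [hi, if_true]
          exact split_sum_by_class c _
        · simp [hi]
    _ = ∑ k, ∑ k', ∑ i, ∑ j, (if c i = k then if c j = k' then x i * B i j * x j else 0 else 0) := by
        refine Finset.sum_congr rfl fun k _ => ?_
        rw [Finset.sum_comm]
    _ = 0 := by
        rw [Finset.sum_eq_zero fun k _ => Finset.sum_eq_zero fun k' _ => key k k']
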